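/- arXiv:1604.05947 — 3 statements merged into one kernel-verified Lean document; each statement's English description precedes it below -/
import Mathlib

section
/- Let r ≥ 0 and t ≥ 2 be integers and let L_1,…,L_t ∈ ℝ[x,y] be nonzero linear forms that are pairwise non-proportional (they define t distinct lines through the origin). Then the ideal I := ⟨L_1^{r+1},…,L_t^{r+1}⟩ ⊆ ℝ[x,y] contains every monomial x^i y^j with i + j ≥ r + ⌈(r+1)/(t-1)⌉. -/
/-!
Statement 1: If `L 1, …, L t` are nonzero, pairwise non-proportional linear forms in
`ℝ[x,y]` with `t ≥ 2`, then the ideal `I = ⟨L₁^{r+1}, …, L_t^{r+1}⟩` contains every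
monomial `x^i y^j` with `i + j ≥ r + ⌈(r+1)/(t-1)⌉`.
(Here `⌈(r+1)/(t-1)⌉` is written as the natural number `(r + t - 1) / (t - 1)`,
which equals the ceiling since `t ≥ 2`.)
-/

section OneVar
open Polynomial Finset



-- helper: v * (C q * v^(q-1) * w) = C q * v^q * w
lemma pow_pred_helper (v w : Polynomial ℝ) (q : ℕ) :
    v * (Polynomial.C (q:ℝ) * v ^ (q-1) * w) = Polynomial.C (q:ℝ) * v ^ q * w := by
  cases q with
  | zero => simp
  | succ q => rw [Nat.succ_sub_one, pow_succ]; ring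

lemma lemB (α β : ℝ) (hβ : β ≠ 0) (e : ℕ) :
    ∀ q, q ≤ e → ∀ h : Polynomial ℝ,
    (C β * X - C α) ^ q ∣ (C α - C β * X) * derivative h + C (β * e) * h →
    (C β * X - C α) ^ q ∣ h := by
  intro q
  induction q with
  | zero => intro _ h _; simpa using one_dvd h
  | succ q IH =>
    intro hqe h hd
    set v : Polynomial ℝ := C β * X - C α with hv
    have hv0 : v ≠ 0 := by
      intro h0
      have : (C β * X - C α).coeff 1 = 0 := by rw [← hv, h0]; simp
      simp [coeff_sub, coeff_C_mul] at this
      exact hβ this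
    have hq : v ^ q ∣ h := by
      refine IH (le_trans (Nat.le_succ q) hqe) h (dvd_trans (pow_dvd_pow v (Nat.le_succ q)) hd)
    obtain ⟨u, rfl⟩ := hq
    have hder : derivative v = C β := by rw [hv]; simp
    have hT : (C α - C β * X) * derivative (v ^ q * u) + C (β * e) * (v ^ q * u)
        = v ^ q * (C (β * ((e:ℝ) - (q:ℝ))) * u - v * derivative u) := by
      rw [derivative_mul, derivative_pow, hder]
      have hh := pow_pred_helper v (C β * u) q
      calc (C α - C β * X) * (Polynomial.C (q:ℝ) * v ^ (q - 1) * C β * u + v ^ q * derivative u)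
            + C (β * e) * (v ^ q * u)
          = -(v * (Polynomial.C (q:ℝ) * v ^ (q-1) * (C β * u))) - v * (v ^ q * derivative u)
            + C (β * e) * (v ^ q * u) := by rw [hv]; ring
        _ = -(Polynomial.C (q:ℝ) * v ^ q * (C β * u)) - v * (v ^ q * derivative u)
            + C (β * e) * (v ^ q * u) := by rw [hh]
        _ = v ^ q * (C (β * ((e:ℝ) - (q:ℝ))) * u - v * derivative u) := by
            simp only [map_mul, map_sub]
            push_cast
            ring
    rw [hT] at hd
    have hdvd1 : v ^ q * v ∣ v ^ q * (C (β * ((e:ℝ) - (q:ℝ))) * u) := by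
      have h2 : v ^ (q+1) ∣ v ^ q * (v * derivative u) := by
        rw [pow_succ]; exact mul_dvd_mul_left _ (Dvd.intro _ rfl)
      have h3 := dvd_add hd h2
      rw [← pow_succ]
      simpa [mul_sub, sub_add_cancel] using h3
    have hvu : v ∣ C (β * ((e:ℝ) - (q:ℝ))) * u :=
      (mul_dvd_mul_iff_left (pow_ne_zero q hv0)).mp hdvd1
    have hne : β * ((e:ℝ) - (q:ℝ)) ≠ 0 := by
      have : (q:ℝ) < (e:ℝ) := by exact_mod_cast hqe
      have h2 : (e:ℝ) - (q:ℝ) ≠ 0 := by linarith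
      exact mul_ne_zero hβ h2
    have hvu2 : v ∣ u := by
      have h4 := mul_dvd_mul_left (C (β * ((e:ℝ) - (q:ℝ)))⁻¹) hvu
      have heq : C (β * ((e:ℝ) - (q:ℝ)))⁻¹ * (C (β * ((e:ℝ) - (q:ℝ))) * u) = u := by
        rw [← mul_assoc, ← map_mul, inv_mul_cancel₀ hne]; simp
      rw [heq] at h4
      exact dvd_trans ⟨C (β * ((e:ℝ) - (q:ℝ)))⁻¹, by ring⟩ h4
    obtain ⟨w, rfl⟩ := hvu2
    rw [pow_succ]
    exact ⟨w, by ring⟩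

noncomputable def Pc (d : ℕ) (c : ℕ → ℝ) : Polynomial ℝ :=
  ∑ n ∈ Finset.range (d+1), Polynomial.C (c n / (n.factorial * (d-n).factorial)) * X ^ n

lemma Pc_coeff (d : ℕ) (c : ℕ → ℝ) (n : ℕ) :
    (Pc d c).coeff n = if n ≤ d then c n / (n.factorial * (d-n).factorial) else 0 := by
  rw [Pc, finset_sum_coeff]
  simp only [coeff_C_mul, coeff_X_pow, mul_ite, mul_one, mul_zero]
  rw [Finset.sum_ite_eq]
  simp [Nat.lt_succ_iff]

lemma lemTP (d : ℕ) (α β : ℝ) (c : ℕ → ℝ) :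
    (C α - C β * X) * derivative (Pc (d+1) c) + C (β * (d+1)) * Pc (d+1) c
      = Pc d (fun n => α * c (n+1) + β * c n) := by
  unfold Pc
  rw [derivative_sum]
  simp only [derivative_C_mul, derivative_X_pow]
  rw [Finset.mul_sum, Finset.mul_sum, ← Finset.sum_add_distrib]
  have key : ∀ n ∈ Finset.range (d+2),
      (C α - C β * X) * (C (c n / (n.factorial * (d+1-n).factorial)) * (C (n:ℝ) * X ^ (n-1)))
        + C (β * (d+1)) * (C (c n / (n.factorial * (d+1-n).factorial)) * X ^ n)
      = C (c n * α * n / (n.factorial * (d+1-n).factorial)) * X^(n-1)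
        + C (c n * β * ((d:ℝ)+1-n) / (n.factorial * (d+1-n).factorial)) * X^n := by
    intro n hn
    rcases Nat.eq_zero_or_pos n with h0 | h1
    · subst h0; simp only [Nat.cast_zero, map_zero]; ring_nf
      simp only [map_add, map_mul, map_zero]; ring
    · have hx : (X : Polynomial ℝ) ^ n = X ^ (n-1) * X := by
        rw [← pow_succ, Nat.sub_add_cancel h1]
      have e1 : c n * α * (n:ℝ) / ((n.factorial : ℝ) * ((d+1-n).factorial : ℝ))
          = α * (n:ℝ) * (c n / ((n.factorial : ℝ) * ((d+1-n).factorial : ℝ))) := by ring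
      have e2 : c n * β * ((d:ℝ)+1-(n:ℝ)) / ((n.factorial : ℝ) * ((d+1-n).factorial : ℝ))
          = β * ((d:ℝ)+1-(n:ℝ)) * (c n / ((n.factorial : ℝ) * ((d+1-n).factorial : ℝ))) := by ring
      rw [e1, e2]
      simp only [map_mul, map_sub, map_add, map_one]
      simp only [hx]
      ring
  rw [Finset.sum_congr rfl key, Finset.sum_add_distrib]
  -- first sum: shift index
  rw [Finset.sum_range_succ' (fun n => C (c n * α * n / (n.factorial * (d+1-n).factorial)) * X^(n-1)) (d+1)]
  rw [Finset.sum_range_succ (fun n => C (c n * β * ((d:ℝ)+1-n) / (n.factorial * (d+1-n).factorial)) * X^n) (d+1)]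
  simp only [Nat.cast_zero, mul_zero, zero_div, map_zero, zero_mul, add_zero, Nat.cast_add,
    Nat.cast_one]
  have hz2 : C (c (d+1) * β * ((d:ℝ)+1-((d:ℝ)+1)) / (((d+1).factorial : ℝ) * ((d+1-(d+1)).factorial : ℝ))) * (X : Polynomial ℝ)^(d+1) = 0 := by
    ring_nf; simp
  rw [hz2, add_zero, ← Finset.sum_add_distrib]
  refine Finset.sum_congr rfl ?_
  intro n hn
  rw [Finset.mem_range] at hn
  have h2 : d + 1 - (n+1) = d - n := by omega
  have h3 : d + 1 - n = (d - n) + 1 := by omega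
  rw [h2, h3]
  have hfac1 : ((n+1).factorial : ℝ) = ((n:ℝ)+1) * (n.factorial : ℝ) := by
    rw [Nat.factorial_succ]; push_cast; ring
  have hfac2 : (((d-n)+1).factorial : ℝ) = ((((d-n):ℕ):ℝ)+1) * ((d-n).factorial : ℝ) := by
    rw [Nat.factorial_succ]; push_cast; ring
  have hdn : ((d:ℝ) + 1 - n) = (((d-n):ℕ):ℝ) + 1 := by
    have h4 : ((d - n : ℕ):ℝ) = (d:ℝ) - n := Nat.cast_sub (Nat.lt_succ_iff.mp hn)
    rw [h4]; ring
  have hne1 : ((n:ℝ)+1) ≠ 0 := by positivity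
  have hne2 : ((((d-n):ℕ):ℝ)+1) ≠ 0 := by positivity
  have hnf : (n.factorial : ℝ) ≠ 0 := by exact_mod_cast n.factorial_ne_zero
  have hdf : ((d-n).factorial : ℝ) ≠ 0 := by exact_mod_cast (d-n).factorial_ne_zero
  have hexp : n + 1 - 1 = n := rfl
  rw [hexp, ← add_mul, ← map_add]
  congr 1
  rw [hfac1, hfac2, hdn]
  push_cast
  field_simp

lemma lemC (α β : ℝ) (hβ : β ≠ 0) (N : ℕ) :
    ∀ m (c : ℕ → ℝ),
    (∀ a, a ≤ N → ∑ s ∈ Finset.range (m+1), (m.choose s : ℝ) * α^s * β^(m-s) * c (a+s) = 0) →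
    (C β * X - C α)^(N+1) ∣ Pc (N+m) c := by
  intro m
  induction m with
  | zero =>
    intro c hc
    have hP : Pc (N+0) c = 0 := by
      unfold Pc
      refine Finset.sum_eq_zero ?_
      intro n hn
      rw [Finset.mem_range, Nat.lt_succ_iff] at hn
      have h := hc n (by omega)
      simp at h
      rw [h]
      simp
    rw [hP]; exact dvd_zero _
  | succ m IH =>
    intro c hc
    have hyp' : ∀ a, a ≤ N → ∑ s ∈ Finset.range (m+1),
        (m.choose s : ℝ) * α^s * β^(m-s) * ((fun n => α * c (n+1) + β * c n) (a+s)) = 0 := by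
      intro a ha
      have H := hc a ha
      have expand : ∀ s ∈ Finset.range (m+1),
          (m.choose s : ℝ) * α^s * β^(m-s) * ((fun n => α * c (n+1) + β * c n) (a+s))
          = (m.choose s : ℝ) * α^(s+1) * β^(m-s) * c (a+s+1)
            + (m.choose s : ℝ) * α^s * β^((m-s)+1) * c (a+s) := by
        intro s hs; simp only; ring
      rw [Finset.sum_congr rfl expand, Finset.sum_add_distrib]
      rw [Finset.sum_range_succ' _ (m+1)] at H
      have split : ∀ i ∈ Finset.range (m+1),
          (((m+1).choose (i+1) : ℝ)) * α^(i+1) * β^(m+1-(i+1)) * c (a+(i+1))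
          = ((m.choose i : ℝ) * α^(i+1) * β^(m-i) * c (a+i+1))
            + ((m.choose (i+1) : ℝ) * α^(i+1) * β^(m-i) * c (a+i+1)) := by
        intro i hi
        have h1 : m+1-(i+1) = m - i := by omega
        have h2 : (m+1).choose (i+1) = m.choose i + m.choose (i+1) := Nat.choose_succ_succ m i
        have h3 : a+(i+1) = a+i+1 := by omega
        rw [h1, h2, h3]; push_cast; ring
      rw [Finset.sum_congr rfl split, Finset.sum_add_distrib] at H
      have hS2 : ∑ s ∈ Finset.range (m+1), (m.choose s:ℝ)*α^s*β^((m-s)+1)*c (a+s)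
          = (∑ i ∈ Finset.range (m+1), (m.choose (i+1):ℝ)*α^(i+1)*β^(m-i)*c (a+i+1))
            + ((m+1).choose 0 : ℝ)*α^0*β^(m+1-0)*c (a+0) := by
        calc ∑ s ∈ Finset.range (m+1), (m.choose s:ℝ)*α^s*β^((m-s)+1)*c (a+s)
            = (∑ i ∈ Finset.range m, (m.choose (i+1):ℝ)*α^(i+1)*β^((m-(i+1))+1)*c (a+(i+1)))
              + (m.choose 0:ℝ)*α^0*β^((m-0)+1)*c (a+0) :=
              Finset.sum_range_succ' (fun s => (m.choose s:ℝ)*α^s*β^((m-s)+1)*c (a+s)) m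
          _ = (∑ i ∈ Finset.range m, (m.choose (i+1):ℝ)*α^(i+1)*β^(m-i)*c (a+i+1))
              + ((m+1).choose 0 : ℝ)*α^0*β^(m+1-0)*c (a+0) := by
              congr 1
              · refine Finset.sum_congr rfl ?_
                intro i hi
                rw [Finset.mem_range] at hi
                have h1 : (m-(i+1))+1 = m - i := by omega
                have h2 : a+(i+1) = a+i+1 := by omega
                rw [h1, h2]
              · norm_num
          _ = _ := by
              rw [Finset.sum_range_succ (fun i => (m.choose (i+1):ℝ)*α^(i+1)*β^(m-i)*c (a+i+1)) m]
              rw [Nat.choose_succ_self]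
              push_cast
              ring
      rw [hS2]
      linarith [H]
    have hdvd := IH (fun n => α * c (n+1) + β * c n) hyp'
    have hdvd2 : (C β * X - C α)^(N+1) ∣
        (C α - C β * X) * derivative (Pc (N+m+1) c) + C (β * ((N+m+1 : ℕ):ℝ)) * Pc (N+m+1) c := by
      have hcast : ((N+m+1 : ℕ):ℝ) = ((N+m : ℕ):ℝ) + 1 := by push_cast; ring
      rw [hcast, lemTP (N+m) α β c]
      exact hdvd
    exact lemB α β hβ (N+m+1) (N+1) (by omega) (Pc (N+m+1) c) hdvd2

lemma key (r t d : ℕ) (ht2 : 2 ≤ t) (hd : r + (r+t-1)/(t-1) ≤ d)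
    (α β : Fin t → ℝ)
    (hΔ : ∀ i j, i ≠ j → α i * β j - α j * β i ≠ 0)
    (c : ℕ → ℝ)
    (hrec : ∀ (k : Fin t) (a : ℕ), a + (r+1) ≤ d →
      ∑ s ∈ Finset.range (r+2), ((r+1).choose s : ℝ) * (α k)^s * (β k)^(r+1-s) * c (a+s) = 0) :
    ∀ n, n ≤ d → c n = 0 := by
  have hnt : Nontrivial (Fin t) :=
    ⟨⟨⟨0, by omega⟩, ⟨1, by omega⟩, by simp [Fin.ext_iff]⟩⟩
  have hq1 : 1 ≤ (r+t-1)/(t-1) := (Nat.one_le_div_iff (by omega)).mpr (by omega)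
  have hdr1 : r + 1 ≤ d := by omega
  set N := d - r - 1 with hN
  have hNd : N + (r+1) = d := by omega
  -- arithmetic bounds
  have hA2 : r + 1 ≤ (t-1) * (N+1) := by
    have h1 : (t-1) * ((r+t-1)/(t-1)) + (r+t-1) % (t-1) = r+t-1 := Nat.div_add_mod _ _
    have h2 : (r+t-1) % (t-1) < t-1 := Nat.mod_lt _ (by omega)
    have h3 : r + 1 + (r+t-1)%(t-1) ≤ (t-1)*((r+t-1)/(t-1)) + (r+t-1)%(t-1) := by
      rw [h1]; omega
    have h4 : r + 1 ≤ (t-1)*((r+t-1)/(t-1)) := Nat.le_of_add_le_add_right h3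
    have h5 : (r+t-1)/(t-1) ≤ N+1 := by omega
    exact h4.trans (Nat.mul_le_mul_left _ h5)
  have hmul : t*(N+1) = (t-1)*(N+1) + (N+1) := by
    have h7 : t = (t-1)+1 := by omega
    calc t*(N+1) = ((t-1)+1)*(N+1) := by rw [← h7]
      _ = (t-1)*(N+1)+(N+1) := by ring
  have hA3 : d + 1 ≤ t * (N+1) := by
    rw [hmul]
    calc d + 1 = (r+1)+(N+1) := by omega
      _ ≤ (t-1)*(N+1) + (N+1) := Nat.add_le_add_right hA2 _
  -- divisibility
  have hdvd : ∀ k, β k ≠ 0 → (C (β k) * X - C (α k))^(N+1) ∣ Pc d c := by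
    intro k hk
    have h := lemC (α k) (β k) hk N (r+1) c ?_
    · rw [hNd] at h; exact h
    · intro a ha
      exact hrec k a (by omega)
  -- coprimality
  have hcop : ∀ i j : Fin t, i ≠ j →
      IsCoprime ((C (β i) * X - C (α i))^(N+1)) ((C (β j) * X - C (α j))^(N+1)) := by
    intro i j hij
    refine IsCoprime.pow ?_
    have hΔ0 := hΔ i j hij
    refine ⟨C (-(β j)/(α i * β j - α j * β i)), C ((β i)/(α i * β j - α j * β i)), ?_⟩
    have hstep : C (-(β j)/(α i * β j - α j * β i)) * (C (β i) * X - C (α i))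
        + C ((β i)/(α i * β j - α j * β i)) * (C (β j) * X - C (α j))
        = C ((-(β j)/(α i * β j - α j * β i))*(β i) + ((β i)/(α i * β j - α j * β i))*(β j)) * X
          + C ((-(β j)/(α i * β j - α j * β i))*(-(α i)) + ((β i)/(α i * β j - α j * β i))*(-(α j))) := by
      simp only [map_mul, map_add, map_neg, map_div₀]
      ring
    rw [hstep]
    have e1 : (-(β j)/(α i * β j - α j * β i))*(β i) + ((β i)/(α i * β j - α j * β i))*(β j) = 0 := by
      field_simp
      ring
    have e2 : (-(β j)/(α i * β j - α j * β i))*(-(α i)) + ((β i)/(α i * β j - α j * β i))*(-(α j)) = 1 := by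
      rw [div_mul_eq_mul_div, div_mul_eq_mul_div, ← add_div, div_eq_one_iff_eq hΔ0]; ring
    rw [e1, e2]
    simp
  -- nonzeroness and degree of factors
  have hvne : ∀ k : Fin t, β k ≠ 0 → (C (β k) * X - C (α k)) ≠ 0 := by
    intro k hk h0
    have : (C (β k) * X - C (α k)).coeff 1 = 0 := by rw [h0]; simp
    simp [coeff_sub, coeff_C_mul] at this
    exact hk this
  have hvdeg : ∀ k : Fin t, β k ≠ 0 → (C (β k) * X - C (α k)).natDegree = 1 := by
    intro k hk
    have : C (β k) * X - C (α k) = C (β k) * X + C (-(α k)) := by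
      rw [map_neg, sub_eq_add_neg]
    rw [this]
    exact natDegree_linear hk
  have hfin : Pc d c = 0 → ∀ n, n ≤ d → c n = 0 := by
    intro h0 n hn
    have h := Pc_coeff d c n
    rw [h0] at h
    simp only [coeff_zero, hn, if_true] at h
    have hnf : ((n.factorial : ℝ) * ((d-n).factorial : ℝ)) ≠ 0 := by
      have := n.factorial_ne_zero
      have := (d-n).factorial_ne_zero
      positivity
    field_simp at h
    simpa using h.symm
  -- main case split
  by_cases hex : ∃ k0, β k0 = 0
  · obtain ⟨k0, hk0⟩ := hex
    obtain ⟨j, hj⟩ := exists_ne k0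
    have hβne : ∀ k, k ≠ k0 → β k ≠ 0 := by
      intro k hk hb
      exact hΔ k k0 hk (by rw [hb, hk0]; ring)
    have hctop : ∀ n, r+1 ≤ n → n ≤ d → c n = 0 := by
      intro n h1 h2
      have hα0 : α k0 ≠ 0 := by
        intro h
        exact hΔ k0 j hj.symm (by rw [h, hk0]; ring)
      have h := hrec k0 (n - (r+1)) (by omega)
      rw [Finset.sum_range_succ] at h
      have hzero : ∑ s ∈ Finset.range (r+1),
          ((r+1).choose s : ℝ) * (α k0)^s * (β k0)^(r+1-s) * c (n - (r+1) + s) = 0 := by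
        refine Finset.sum_eq_zero ?_
        intro s hs
        rw [Finset.mem_range] at hs
        rw [hk0, zero_pow (by omega : r+1-s ≠ 0)]
        ring
      rw [hzero, zero_add] at h
      simp only [Nat.choose_self, Nat.cast_one, Nat.sub_self, pow_zero, one_mul, mul_one] at h
      have hn' : n - (r+1) + (r+1) = n := by omega
      rw [hn'] at h
      have := pow_ne_zero (r+1) hα0
      rcases mul_eq_zero.mp h with h' | h'
      · exact absurd h' this
      · exact h'
    have hdegP : (Pc d c).natDegree ≤ r := by
      refine natDegree_le_iff_coeff_eq_zero.mpr ?_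
      intro m hm
      rw [Pc_coeff]
      by_cases hmd : m ≤ d
      · rw [if_pos hmd, hctop m (by omega) hmd, zero_div]
      · rw [if_neg hmd]
    have hP0 : Pc d c = 0 := by
      by_contra hP
      have hprod : ∏ k ∈ Finset.univ.erase k0, (C (β k) * X - C (α k))^(N+1) ∣ Pc d c := by
        refine Finset.prod_dvd_of_coprime ?_ ?_
        · intro i hi j' hj' hij
          exact hcop i j' hij
        · intro k hk
          exact hdvd k (hβne k (Finset.ne_of_mem_erase hk))
      have hpne : ∀ k ∈ Finset.univ.erase k0, (C (β k) * X - C (α k))^(N+1) ≠ 0 := by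
        intro k hk
        exact pow_ne_zero _ (hvne k (hβne k (Finset.ne_of_mem_erase hk)))
      have hdeg := Polynomial.natDegree_le_of_dvd hprod hP
      rw [Polynomial.natDegree_prod _ _ hpne] at hdeg
      have hsum : ∑ k ∈ Finset.univ.erase k0, ((C (β k) * X - C (α k))^(N+1)).natDegree
          = (t-1) * (N+1) := by
        rw [Finset.sum_congr rfl (fun k hk => by
          rw [Polynomial.natDegree_pow, hvdeg k (hβne k (Finset.ne_of_mem_erase hk)), mul_one])]
        rw [Finset.sum_const, Finset.card_erase_of_mem (Finset.mem_univ _)]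
        simp [Fintype.card_fin, mul_comm]
      rw [hsum] at hdeg
      have := hA2.trans (hdeg.trans hdegP)
      omega
    exact hfin hP0
  · push_neg at hex
    have hdegP : (Pc d c).natDegree ≤ d := by
      refine natDegree_le_iff_coeff_eq_zero.mpr ?_
      intro m hm
      rw [Pc_coeff, if_neg (by omega)]
    have hP0 : Pc d c = 0 := by
      by_contra hP
      have hprod : ∏ k : Fin t, (C (β k) * X - C (α k))^(N+1) ∣ Pc d c := by
        refine Finset.prod_dvd_of_coprime ?_ ?_
        · intro i hi j' hj' hij
          exact hcop i j' hij
        · intro k _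
          exact hdvd k (hex k)
      have hpne : ∀ k ∈ Finset.univ, (C (β k) * X - C (α k))^(N+1) ≠ 0 := by
        intro k _
        exact pow_ne_zero _ (hvne k (hex k))
      have hdeg := Polynomial.natDegree_le_of_dvd hprod hP
      rw [Polynomial.natDegree_prod _ _ hpne] at hdeg
      have hsum : ∑ k : Fin t, ((C (β k) * X - C (α k))^(N+1)).natDegree = t * (N+1) := by
        rw [Finset.sum_congr rfl (fun k hk => by
          rw [Polynomial.natDegree_pow, hvdeg k (hex k), mul_one])]
        simp [Finset.card_univ, Fintype.card_fin, mul_comm]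
      rw [hsum] at hdeg
      have := hA3.trans (hdeg.trans hdegP)
      omega
    exact hfin hP0


end OneVar

section MvPart

abbrev R2 := MvPolynomial (Fin 2) ℝ

noncomputable def e2 (n m : ℕ) : Fin 2 →₀ ℕ := Finsupp.single 0 n + Finsupp.single 1 m

lemma e2_apply0 (n m : ℕ) : e2 n m 0 = n := by simp [e2, Finsupp.single_apply]

lemma e2_apply1 (n m : ℕ) : e2 n m 1 = m := by simp [e2, Finsupp.single_apply]

lemma deg2 (u : Fin 2 →₀ ℕ) : u.degree = u 0 + u 1 := by
  rw [Finsupp.degree_apply]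
  rw [Finset.sum_subset (Finset.subset_univ u.support)]
  · exact Fin.sum_univ_two u
  · intro x _ hx
    exact Finsupp.notMem_support_iff.mp hx

lemma u_eq (u : Fin 2 →₀ ℕ) : u = e2 (u 0) (u 1) := by
  ext x
  fin_cases x <;> simp [e2, Finsupp.single_apply]

lemma e2_eq_iff {n m n' m' : ℕ} : e2 n m = e2 n' m' ↔ n = n' ∧ m = m' := by
  constructor
  · intro h
    constructor
    · have := congrArg (fun u : Fin 2 →₀ ℕ => u 0) h
      simpa [e2_apply0] using this
    · have := congrArg (fun u : Fin 2 →₀ ℕ => u 1) h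
      simpa [e2_apply1] using this
  · rintro ⟨rfl, rfl⟩; rfl

lemma X_pow_mul_X_pow (n m : ℕ) :
    (MvPolynomial.X 0 : R2)^n * (MvPolynomial.X 1)^m = MvPolynomial.monomial (e2 n m) 1 := by
  rw [MvPolynomial.X_pow_eq_monomial, MvPolynomial.X_pow_eq_monomial, MvPolynomial.monomial_mul,
    mul_one]
  rfl

lemma recon (d : ℕ) (p : R2) (hp : p.IsHomogeneous d) :
    ∑ n ∈ Finset.range (d+1),
      (MvPolynomial.coeff (e2 n (d-n)) p) • ((MvPolynomial.X 0 : R2)^n * (MvPolynomial.X 1)^(d-n))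
      = p := by
  apply MvPolynomial.ext
  intro u
  rw [MvPolynomial.coeff_sum]
  simp only [MvPolynomial.coeff_smul, X_pow_mul_X_pow, MvPolynomial.coeff_monomial]
  by_cases hud : u 0 + u 1 = d
  · rw [Finset.sum_eq_single (u 0)]
    · have h1 : e2 (u 0) (d - u 0) = u := by
        conv_rhs => rw [u_eq u]
        rw [e2_eq_iff]
        exact ⟨rfl, by omega⟩
      rw [if_pos h1, h1, smul_eq_mul, mul_one]
    · intro n hn hne
      by_cases h : e2 n (d-n) = u
      · exfalso
        have h0 := congrArg (fun v : Fin 2 →₀ ℕ => v 0) h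
        simp only [e2_apply0] at h0
        exact hne h0
      · rw [if_neg h, smul_zero]
    · intro h
      rw [Finset.mem_range] at h
      omega
  · have hc : MvPolynomial.coeff u p = 0 := by
      apply hp.coeff_eq_zero
      rw [deg2]; exact hud
    rw [hc]
    refine Finset.sum_eq_zero ?_
    intro n hn
    rw [Finset.mem_range, Nat.lt_succ_iff] at hn
    by_cases h : e2 n (d-n) = u
    · exfalso
      have h0 := congrArg (fun v : Fin 2 →₀ ℕ => v 0) h
      have h1 := congrArg (fun v : Fin 2 →₀ ℕ => v 1) h
      simp only [e2_apply0, e2_apply1] at h0 h1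
      omega
    · rw [if_neg h, smul_zero]

lemma hom1 (L : R2) (h : L.IsHomogeneous 1) :
    L = MvPolynomial.C (MvPolynomial.coeff (e2 1 0) L) * MvPolynomial.X 0
      + MvPolynomial.C (MvPolynomial.coeff (e2 0 1) L) * MvPolynomial.X 1 := by
  have h2 := recon 1 L h
  rw [Finset.sum_range_succ, Finset.sum_range_one] at h2
  simp only [pow_zero, pow_one, one_mul, mul_one, Nat.sub_self, Nat.sub_zero] at h2
  rw [MvPolynomial.smul_eq_C_mul, MvPolynomial.smul_eq_C_mul] at h2
  conv_lhs => rw [← h2]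
  ring

lemma expand2 (α β : ℝ) (a b m : ℕ) :
    (MvPolynomial.X 0 : R2)^a * (MvPolynomial.X 1)^b
        * (MvPolynomial.C α * MvPolynomial.X 0 + MvPolynomial.C β * MvPolynomial.X 1)^m
    = ∑ s ∈ Finset.range (m+1), ((m.choose s : ℝ) * α^s * β^(m-s))
        • ((MvPolynomial.X 0 : R2)^(a+s) * (MvPolynomial.X 1)^(b+(m-s))) := by
  rw [add_pow, Finset.mul_sum]
  refine Finset.sum_congr rfl ?_
  intro s hs
  rw [MvPolynomial.smul_eq_C_mul, mul_pow, mul_pow, ← map_pow, ← map_pow,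
    ← map_natCast (MvPolynomial.C : ℝ →+* R2) (m.choose s), map_mul, map_mul, pow_add, pow_add]
  ring

end MvPart


open MvPolynomial

theorem powers_of_linear_forms_contain_high_degree_monomials
    (r t : ℕ) (ht2 : 2 ≤ t)
    (L : Fin t → MvPolynomial (Fin 2) ℝ)
    (hhom : ∀ i, (L i).IsHomogeneous 1)
    (hne : ∀ i, L i ≠ 0)
    (hprop : ∀ i j, i ≠ j → ∀ c : ℝ, L i ≠ c • L j)
    (I : Ideal (MvPolynomial (Fin 2) ℝ))
    (hI : I = Ideal.span (Set.range fun i => L i ^ (r + 1))) :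
    ∀ i j : ℕ, r + (r + t - 1) / (t - 1) ≤ i + j →
      (X 0 : MvPolynomial (Fin 2) ℝ) ^ i * (X 1) ^ j ∈ I := by
  subst hI
  intro i j hij
  set d := i + j with hdij
  have hq1 : 1 ≤ (r+t-1)/(t-1) := (Nat.one_le_div_iff (by omega)).mpr (by omega)
  have hdr1 : r + 1 ≤ d := by omega
  set A : Fin t → ℝ := fun k => MvPolynomial.coeff (e2 1 0) (L k) with hA
  set B : Fin t → ℝ := fun k => MvPolynomial.coeff (e2 0 1) (L k) with hB
  have hLk : ∀ k, L k = MvPolynomial.C (A k) * X 0 + MvPolynomial.C (B k) * X 1 :=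
    fun k => hom1 (L k) (hhom k)
  have hΔ : ∀ k l, k ≠ l → A k * B l - A l * B k ≠ 0 := by
    intro k l hkl h0
    have hnz : A l ≠ 0 ∨ B l ≠ 0 := by
      by_contra hcon
      push_neg at hcon
      apply hne l
      rw [hLk l, hcon.1, hcon.2]; simp
    rcases ne_or_eq (B l) 0 with hBl | hBl
    · refine hprop k l hkl (B k / B l) ?_
      have e1 : A k = (B k / B l) * A l := by
        field_simp
        nlinarith [h0]
      have e2 : B k = (B k / B l) * B l := by field_simp
      rw [hLk k, hLk l, MvPolynomial.smul_eq_C_mul, mul_add, ← mul_assoc, ← mul_assoc,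
        ← map_mul, ← map_mul, ← e1, ← e2]
    · have hAl : A l ≠ 0 := by tauto
      have hBk : B k = 0 := by
        rw [hBl] at h0
        have h1 : A l * B k = 0 := by linarith
        rcases mul_eq_zero.mp h1 with h | h
        · exact absurd h hAl
        · exact h
      refine hprop k l hkl (A k / A l) ?_
      have e1 : A k = (A k / A l) * A l := by field_simp
      have e2 : B k = (A k / A l) * B l := by rw [hBk, hBl]; ring
      rw [hLk k, hLk l, MvPolynomial.smul_eq_C_mul, mul_add, ← mul_assoc, ← mul_assoc,
        ← map_mul, ← map_mul, ← e1, ← e2]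
  set gen : Fin t × Fin (d - r) → R2 :=
    fun ka => (X 0 : R2)^(ka.2 : ℕ) * (X 1)^(d - r - 1 - (ka.2 : ℕ)) * (L ka.1)^(r+1) with hgen
  have hgenI : ∀ ka, gen ka ∈ Ideal.span (Set.range fun k => L k ^ (r+1)) := by
    intro ka
    exact Ideal.mul_mem_left _ _ (Ideal.subset_span ⟨ka.1, rfl⟩)
  have hgenhom : ∀ ka, (gen ka).IsHomogeneous d := by
    rintro ⟨k, a⟩
    have ha : (a : ℕ) < d - r := a.isLt
    have h1 := (((MvPolynomial.isHomogeneous_X ℝ (0 : Fin 2)).pow (a:ℕ)).mul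
      ((MvPolynomial.isHomogeneous_X ℝ (1 : Fin 2)).pow (d-r-1-(a:ℕ)))).mul ((hhom k).pow (r+1))
    have heq : 1*(a:ℕ) + 1*(d-r-1-(a:ℕ)) + 1*(r+1) = d := by omega
    rw [heq] at h1
    exact h1
  set vec : Fin t × Fin (d - r) → EuclideanSpace ℝ (Fin (d+1)) :=
    fun ka => WithLp.toLp 2 (fun n => MvPolynomial.coeff (e2 (n:ℕ) (d - (n:ℕ))) (gen ka)) with hvec
  have hspan : Submodule.span ℝ (Set.range vec) = ⊤ := by
    rw [← Submodule.orthogonal_eq_bot_iff, Submodule.eq_bot_iff]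
    intro v hv
    rw [Submodule.mem_orthogonal] at hv
    have hv' : ∀ ka, (inner ℝ (vec ka) v : ℝ) = 0 :=
      fun ka => hv _ (Submodule.subset_span ⟨ka, rfl⟩)
    set c : ℕ → ℝ := fun n => if h : n < d+1 then v ⟨n, h⟩ else 0 with hc
    have hrec : ∀ (k : Fin t) (a : ℕ), a + (r+1) ≤ d →
        ∑ s ∈ Finset.range (r+2), ((r+1).choose s : ℝ) * (A k)^s * (B k)^(r+1-s) * c (a+s) = 0 := by
      intro k a ha
      have hgencoe : ∀ n : Fin (d+1), MvPolynomial.coeff (e2 (n:ℕ) (d - (n:ℕ)))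
          (gen (k, ⟨a, by omega⟩))
          = ∑ s ∈ Finset.range (r+2),
              (((r+1).choose s : ℝ) * (A k)^s * (B k)^(r+1-s)) * (if a+s = (n:ℕ) then 1 else 0) := by
        intro n
        rw [hgen]
        simp only
        rw [hLk k, expand2, MvPolynomial.coeff_sum]
        refine Finset.sum_congr rfl ?_
        intro s hs
        rw [Finset.mem_range, Nat.lt_succ_iff] at hs
        rw [MvPolynomial.coeff_smul, X_pow_mul_X_pow, MvPolynomial.coeff_monomial]
        rw [smul_eq_mul]
        congr 1
        by_cases h : a + s = (n:ℕ)
        · rw [if_pos h, if_pos]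
          rw [e2_eq_iff]
          refine ⟨h, by omega⟩
        · rw [if_neg h, if_neg]
          intro hcon
          exact h (e2_eq_iff.mp hcon).1
      have h := hv' (k, ⟨a, by omega⟩)
      rw [PiLp.inner_apply] at h
      simp only [RCLike.inner_apply, conj_trivial] at h
      rw [hvec] at h
      simp only [PiLp.toLp_apply] at h
      rw [Finset.sum_congr rfl (fun n _ => by rw [hgencoe n])] at h
      have hcv : ∀ n : Fin (d+1), v n = c (n:ℕ) := by
        intro n
        show v n = if h : (n:ℕ) < d + 1 then v ⟨(n:ℕ), h⟩ else 0
        rw [dif_pos n.isLt]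
      rw [Finset.sum_congr rfl (fun n _ => by rw [hcv n])] at h
      have hswap : ∑ n : Fin (d+1), (∑ s ∈ Finset.range (r+2),
          (((r+1).choose s : ℝ) * (A k)^s * (B k)^(r+1-s)) * (if a+s = (n:ℕ) then 1 else 0)) * c (n:ℕ)
          = ∑ s ∈ Finset.range (r+2), ((r+1).choose s : ℝ) * (A k)^s * (B k)^(r+1-s) * c (a+s) := by
        rw [Fin.sum_univ_eq_sum_range (fun m => (∑ s ∈ Finset.range (r+2),
          (((r+1).choose s : ℝ) * (A k)^s * (B k)^(r+1-s)) * (if a+s = m then 1 else 0)) * c m)]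
        rw [Finset.sum_congr rfl (fun m _ => Finset.sum_mul _ _ _)]
        rw [Finset.sum_comm]
        refine Finset.sum_congr rfl ?_
        intro s hs
        rw [Finset.mem_range, Nat.lt_succ_iff] at hs
        have hmem : a + s ∈ Finset.range (d+1) := by rw [Finset.mem_range]; omega
        calc ∑ m ∈ Finset.range (d+1),
              ((((r+1).choose s : ℝ) * (A k)^s * (B k)^(r+1-s)) * (if a+s = m then 1 else 0)) * c m
            = ∑ m ∈ Finset.range (d+1), (if a+s = m then
                (((r+1).choose s : ℝ) * (A k)^s * (B k)^(r+1-s)) * c m else 0) := by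
              refine Finset.sum_congr rfl ?_
              intro m _
              by_cases h : a+s = m
              · simp [h]
              · simp [h]
          _ = ((r+1).choose s : ℝ) * (A k)^s * (B k)^(r+1-s) * c (a+s) := by
              rw [Finset.sum_ite_eq, if_pos hmem]
      rw [← hswap]
      exact Eq.trans (Finset.sum_congr rfl (fun n _ => mul_comm _ _)) h
    have hz := key r t d ht2 (by omega) A B hΔ c hrec
    have : v = 0 := by
      ext n
      have h1 := hz (n:ℕ) (by omega)
      have h2 : c (n:ℕ) = v n := dif_pos n.isLt
      show v n = 0
      rw [← h2, h1]
    exact this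
  -- final step
  have hxyhom : ((X 0 : R2)^i * (X 1)^j).IsHomogeneous d := by
    have h1 := ((MvPolynomial.isHomogeneous_X ℝ (0 : Fin 2)).pow i).mul
      ((MvPolynomial.isHomogeneous_X ℝ (1 : Fin 2)).pow j)
    have heq : 1*i + 1*j = d := by omega
    rw [heq] at h1
    exact h1
  set w : EuclideanSpace ℝ (Fin (d+1)) :=
    WithLp.toLp 2 (fun n => MvPolynomial.coeff (e2 (n:ℕ) (d - (n:ℕ))) ((X 0 : R2)^i * (X 1)^j)) with hw
  have hwmem : w ∈ Submodule.span ℝ (Set.range vec) := by rw [hspan]; trivial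
  set φ : EuclideanSpace ℝ (Fin (d+1)) → R2 :=
    fun u => ∑ n : Fin (d+1), u n • ((X 0 : R2)^(n:ℕ) * (X 1)^(d-(n:ℕ))) with hφ
  have hφmem : ∀ u ∈ Submodule.span ℝ (Set.range vec),
      φ u ∈ Ideal.span (Set.range fun k => L k ^ (r+1)) := by
    intro u hu
    induction hu using Submodule.span_induction with
    | mem x hx =>
      obtain ⟨ka, rfl⟩ := hx
      have : φ (vec ka) = gen ka := by
        rw [hφ, hvec]
        simp only [PiLp.toLp_apply]
        rw [Fin.sum_univ_eq_sum_range (fun m =>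
          MvPolynomial.coeff (e2 m (d - m)) (gen ka) • ((X 0 : R2)^m * (X 1)^(d-m)))]
        exact recon d (gen ka) (hgenhom ka)
      rw [this]
      exact hgenI ka
    | zero => simp [hφ]
    | add x y _ _ hx hy =>
      have : φ (x + y) = φ x + φ y := by
        rw [hφ]
        simp only
        rw [← Finset.sum_add_distrib]
        refine Finset.sum_congr rfl ?_
        intro n _
        rw [← add_smul]
        rfl
      rw [this]
      exact Ideal.add_mem _ hx hy
    | smul γ x _ hx =>
      have : φ (γ • x) = MvPolynomial.C γ * φ x := by
        rw [hφ]
        simp only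
        rw [Finset.mul_sum]
        refine Finset.sum_congr rfl ?_
        intro n _
        rw [← MvPolynomial.smul_eq_C_mul, smul_smul]
        rfl
      rw [this]
      exact Ideal.mul_mem_left _ _ hx
  have hfinal : φ w = (X 0 : R2)^i * (X 1)^j := by
    rw [hφ, hw]
    simp only [PiLp.toLp_apply]
    rw [Fin.sum_univ_eq_sum_range (fun m =>
      MvPolynomial.coeff (e2 m (d - m)) ((X 0 : R2)^i * (X 1)^j) • ((X 0 : R2)^m * (X 1)^(d-m)))]
    exact recon d _ hxyhom
  rw [← hfinal]
  exact hφmem w hwmem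
end

section
/- Let r ≥ 0 and let G_1,…,G_N ∈ S = ℝ[x,y,z] be homogeneous forms of common degree n, all lying in the ideal ⟨x,y⟩ (so all vanish at [0:0:1]), such that G_1 and G_2 have no common irreducible factor and every G_i lies in the real linear span of G_1 and G_2. Suppose among G_1,…,G_N there are exactly s ≥ 2 pairwise non-proportional forms, set t := min{s, r+2}, and suppose G_1,…,G_t are pairwise non-proportional. Then the ideal J := ⟨G_1^{r+1},…,G_N^{r+1}⟩ equals ⟨G_1^{r+1},…,G_t^{r+1}⟩, and G_1^{r+1},…,G_t^{r+1} minimally generate J, i.e. dim_ℝ(J/mJ) = t. -/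
/-!
Statement 2: curves in a pencil.  `G 1, …, G N` are forms of degree `n` in
`S = ℝ[x,y,z]`, all vanishing at `[0:0:1]` (i.e. lying in `⟨x,y⟩`), with `G 0`, `G 1`
relatively prime and every `G i` in the real span of `G 0` and `G 1`; there are exactly
`s ≥ 2` pairwise non-proportional forms among them.  With `t = min s (r+2)` and
`G 0, …, G (t-1)` pairwise non-proportional, the ideal `J = ⟨G i ^ (r+1)⟩` equals the
ideal generated by the first `t` powers, and these minimally generate it:
`dim_ℝ (J / mJ) = t`.
-/

open MvPolynomial

noncomputable section

abbrev PS := MvPolynomial (Fin 3) ℝ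

/-- `G` and `H` are proportional (one is a real scalar multiple of the other). -/
def Prp (G H : PS) : Prop := (∃ c : ℝ, G = c • H) ∨ (∃ c : ℝ, H = c • G)

/-- The dimension of `J ⊗ S/m = J/mJ` as a real vector space, realized as the image of
`J` in `S ⧸ mJ`, where `m = ⟨x,y,z⟩`.  This is the minimal number of generators of `J`. -/
def mingens (J : Ideal PS) : ℕ :=
  Module.finrank ℝ ↥(Submodule.map
    (Ideal.Quotient.mkₐ ℝ ((Ideal.span {X 0, X 1, X 2} : Ideal PS) * J)).toLinearMap
    (Submodule.restrictScalars ℝ (J : Submodule PS PS)))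

/-! ### Auxiliary lemmas -/

abbrev PB := MvPolynomial (Fin 2) ℝ

/-- The binary linear form `a x + b y`. -/
def ell (a b : ℝ) : PB := C a * X 0 + C b * X 1

lemma ell_ne_zero {a b : ℝ} (h : ¬ (a = 0 ∧ b = 0)) : ell a b ≠ 0 := by
  intro he
  have ha : a = 0 := by
    have := congrArg (coeff (Finsupp.single (0 : Fin 2) 1)) he
    simpa [ell, coeff_X', Finsupp.single_eq_single_iff] using this
  have hb : b = 0 := by
    have := congrArg (coeff (Finsupp.single (1 : Fin 2) 1)) he
    simpa [ell, coeff_X', Finsupp.single_eq_single_iff] using this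
  exact h ⟨ha, hb⟩

/-- The differential operator `b ∂/∂x - a ∂/∂y`. -/
def Dop (a b : ℝ) : PB →ₗ[ℝ] PB :=
  b • (pderiv (R := ℝ) (0 : Fin 2)).toLinearMap - a • (pderiv (R := ℝ) (1 : Fin 2)).toLinearMap

lemma pderiv0_ell (c d : ℝ) : pderiv (0 : Fin 2) (ell c d) = C c := by
  simp [ell]

lemma pderiv1_ell (c d : ℝ) : pderiv (1 : Fin 2) (ell c d) = C d := by
  simp [ell]

lemma Dop_ell_pow (a b c d : ℝ) (m : ℕ) :
    Dop a b (ell c d ^ m) = ((m : ℝ) * (b * c - a * d)) • ell c d ^ (m - 1) := by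
  have h0 : pderiv (0 : Fin 2) (ell c d ^ m) = ((m : ℝ) * c) • ell c d ^ (m-1) := by
    rw [(pderiv (R := ℝ) (0 : Fin 2)).leibniz_pow, pderiv0_ell]
    simp [smul_eq_mul, nsmul_eq_mul, smul_eq_C_mul, C_mul]
    ring
  have h1 : pderiv (1 : Fin 2) (ell c d ^ m) = ((m : ℝ) * d) • ell c d ^ (m-1) := by
    rw [(pderiv (R := ℝ) (1 : Fin 2)).leibniz_pow, pderiv1_ell]
    simp [smul_eq_mul, nsmul_eq_mul, smul_eq_C_mul, C_mul]
    ring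
  have : Dop a b (ell c d ^ m)
      = b • (pderiv (0 : Fin 2) (ell c d ^ m)) - a • (pderiv (1 : Fin 2) (ell c d ^ m)) := rfl
  rw [this, h0, h1, smul_smul, smul_smul, ← sub_smul]
  ring_nf

/-- Powers of pairwise non-proportional binary linear forms are linearly independent
(in the appropriate range of degrees). -/
lemma ell_pow_indep {ι : Type} [DecidableEq ι] (v : ι → ℝ × ℝ) :
    ∀ (m : ℕ) (s : Finset ι), s.card ≤ m + 1 →
    (∀ i ∈ s, ¬ ((v i).1 = 0 ∧ (v i).2 = 0)) →
    (∀ i ∈ s, ∀ j ∈ s, i ≠ j → (v i).1 * (v j).2 - (v j).1 * (v i).2 ≠ 0) →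
    ∀ d : ι → ℝ, ∑ i ∈ s, d i • ell (v i).1 (v i).2 ^ m = 0 → ∀ i ∈ s, d i = 0 := by
  intro m
  induction m with
  | zero =>
    intro s hcard _ _ d hsum i hi
    interval_cases h : s.card
    · simp [Finset.card_eq_zero.mp h] at hi
    · obtain ⟨j, hj⟩ := Finset.card_eq_one.mp h
      subst hj
      simp only [Finset.mem_singleton] at hi
      subst hi
      simp only [Finset.sum_singleton, pow_zero] at hsum
      have : C (d i) = (0 : PB) := by
        rw [← hsum]; rw [smul_eq_C_mul, mul_one]
      simpa using congrArg (coeff 0) this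
  | succ m ih =>
    intro s hcard hnz hcross d hsum i hi
    have hDs : ∑ j ∈ s, (d j * (((m:ℝ)+1) * ((v i).2 * (v j).1 - (v i).1 * (v j).2)))
        • ell (v j).1 (v j).2 ^ m = 0 := by
      have := congrArg (Dop (v i).1 (v i).2) hsum
      rw [map_sum, map_zero] at this
      rw [← this]
      refine Finset.sum_congr rfl fun j hj => ?_
      rw [map_smul, Dop_ell_pow, smul_smul, Nat.add_sub_cancel]
      push_cast
      ring_nf
    have herase : ∀ j ∈ s.erase i,
        d j * (((m:ℝ)+1) * ((v i).2 * (v j).1 - (v i).1 * (v j).2)) = 0 := by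
      intro j hj
      refine ih (s.erase i) ?_ (fun k hk => hnz k (Finset.mem_of_mem_erase hk))
        (fun k hk l hl hkl => hcross k (Finset.mem_of_mem_erase hk) l
          (Finset.mem_of_mem_erase hl) hkl)
        (fun j => d j * (((m:ℝ)+1) * ((v i).2 * (v j).1 - (v i).1 * (v j).2))) ?_ j hj
      · have := Finset.card_erase_of_mem hi
        omega
      · rw [← hDs]
        rw [← Finset.sum_erase_add s _ hi]
        have : d i * (((m:ℝ)+1) * ((v i).2 * (v i).1 - (v i).1 * (v i).2)) = 0 := by ring
        rw [this, zero_smul, add_zero]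
    have hdj : ∀ j ∈ s.erase i, d j = 0 := by
      intro j hj
      have h1 := herase j hj
      have hij : i ≠ j := (Finset.ne_of_mem_erase hj).symm
      have h2 : (v i).2 * (v j).1 - (v i).1 * (v j).2 ≠ 0 := by
        intro h
        apply hcross j (Finset.mem_of_mem_erase hj) i hi hij.symm
        nlinarith [h]
      have h3 : ((m:ℝ)+1) ≠ 0 := by positivity
      rcases mul_eq_zero.mp h1 with h | h
      · exact h
      · rcases mul_eq_zero.mp h with h | h
        · exact absurd h h3
        · exact absurd h h2
    have : d i • ell (v i).1 (v i).2 ^ (m+1) = 0 := by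
      rw [← hsum, ← Finset.sum_erase_add s _ hi]
      rw [Finset.sum_eq_zero fun j hj => by rw [hdj j hj, zero_smul], zero_add]
    rw [smul_eq_C_mul] at this
    rcases mul_eq_zero.mp this with h | h
    · simpa using congrArg (coeff 0) h
    · exact absurd h (pow_ne_zero _ (ell_ne_zero (hnz i hi)))

/-- The space of binary forms of degree `m`, as the span of the monomials. -/
def VB (m : ℕ) : Submodule ℝ PB :=
  Submodule.span ℝ (Set.range fun k : Fin (m+1) => (X 0 : PB)^(k:ℕ) * X 1^(m-(k:ℕ)))

lemma ell_pow_mem_VB (a b : ℝ) (m : ℕ) : ell a b ^ m ∈ VB m := by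
  rw [ell, add_pow]
  refine Submodule.sum_mem _ fun k hk => ?_
  have hk' : k < m + 1 := Finset.mem_range.mp hk
  have : (C a * X 0 : PB)^k * (C b * X 1)^(m-k) * ((m.choose k : ℕ) : PB)
      = (a^k * b^(m-k) * (m.choose k : ℝ)) • ((X 0 : PB)^k * X 1^(m-k)) := by
    rw [mul_pow, mul_pow, smul_eq_C_mul, ← C_eq_coe_nat, C_mul, C_mul, C_pow, C_pow]
    ring
  rw [this]
  exact Submodule.smul_mem _ _ (Submodule.subset_span ⟨⟨k, hk'⟩, rfl⟩)

instance VB_fd (m : ℕ) : FiniteDimensional ℝ (VB m) :=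
  FiniteDimensional.span_of_finite ℝ (Set.finite_range _)

lemma finrank_VB_le (m : ℕ) : Module.finrank ℝ (VB m) ≤ m + 1 := by
  classical
  have := finrank_span_le_card (R := ℝ)
    (Set.range fun k : Fin (m+1) => (X 0 : PB)^(k:ℕ) * X 1^(m-(k:ℕ)))
  refine this.trans ?_
  have := Set.toFinset_range (fun k : Fin (m+1) => (X 0 : PB)^(k:ℕ) * X 1^(m-(k:ℕ)))
  rw [this]
  exact (Finset.card_image_le).trans (by simp)

/-- Monomials in two coprime non-unit polynomials are linearly independent. -/
lemma mono_indep {G0 G1 : PS} (h1 : ¬ IsUnit G1) (hg1 : G1 ≠ 0)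
    (hrel : IsRelPrime G0 G1) :
    ∀ (m : ℕ) (c : ℕ → ℝ), (∑ k ∈ Finset.range (m+1), c k • (G0^k * G1^(m-k)) = 0) →
    ∀ k < m+1, c k = 0 := by
  intro m
  induction m with
  | zero =>
    intro c hsum k hk
    interval_cases k
    simp only [Finset.sum_range_one, pow_zero, mul_one, smul_eq_C_mul, mul_one] at hsum
    simpa using congrArg (coeff 0) hsum
  | succ m ih =>
    intro c hsum k hk
    rw [Finset.sum_range_succ] at hsum
    have hrw : ∑ j ∈ Finset.range (m+1), c j • (G0^j * G1^(m+1-j))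
        = (∑ j ∈ Finset.range (m+1), c j • (G0^j * G1^(m-j))) * G1 := by
      rw [Finset.sum_mul]
      refine Finset.sum_congr rfl fun j hj => ?_
      have hj' : j < m + 1 := Finset.mem_range.mp hj
      rw [smul_mul_assoc, mul_assoc, ← pow_succ]
      congr 3
      omega
    rw [hrw] at hsum
    simp only [Nat.sub_self, pow_zero, mul_one] at hsum
    have hctop : c (m+1) = 0 := by
      by_contra hc
      have hdvd : G1 ∣ C (c (m+1)) * G0 ^ (m+1) := by
        refine ⟨-(∑ j ∈ Finset.range (m+1), c j • (G0^j * G1^(m-j))), ?_⟩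
        rw [← smul_eq_C_mul]
        linear_combination hsum
      have hhim : G1 ∣ G0 ^ (m+1) := by
        have hu : IsUnit (C (c (m+1)) : PS) := (isUnit_iff_ne_zero.mpr hc).map C
        exact (hu.dvd_mul_left).mp hdvd
      exact h1 ((hrel.pow_left (m := m+1)) hhim dvd_rfl)
    rcases Nat.lt_succ_iff_lt_or_eq.mp hk with hk' | hk'
    · refine ih c ?_ k hk'
      rw [hctop, zero_smul, add_zero] at hsum
      exact (mul_eq_zero.mp hsum).resolve_right hg1
    · rw [hk', hctop]

lemma mono_indep_fin {G0 G1 : PS} (h1 : ¬ IsUnit G1) (hg1 : G1 ≠ 0)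
    (hrel : IsRelPrime G0 G1) (m : ℕ) (c : Fin (m+1) → ℝ)
    (hsum : ∑ k : Fin (m+1), c k • (G0^(k:ℕ) * G1^(m-(k:ℕ))) = 0) : ∀ k, c k = 0 := by
  intro k
  set c' : ℕ → ℝ := fun j => if h : j < m+1 then c ⟨j, h⟩ else 0 with hc'
  have hs : ∑ j ∈ Finset.range (m+1), c' j • (G0^j * G1^(m-j)) = 0 := by
    rw [← Fin.sum_univ_eq_sum_range (fun j => c' j • (G0^j * G1^(m-j))) (m+1), ← hsum]
    refine Finset.sum_congr rfl fun j _ => ?_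
    simp [hc', j.isLt, j.is_le]
  have := mono_indep h1 hg1 hrel m c' hs k k.isLt
  simpa [hc', k.isLt, k.is_le] using this

lemma mem_m3_of_constantCoeff {p : PS} (hp : constantCoeff p = 0) :
    p ∈ (Ideal.span {X 0, X 1, X 2} : Ideal PS) := by
  have hset : ({X 0, X 1, X 2} : Set PS) = MvPolynomial.X '' Set.univ := by
    ext q
    simp only [Set.mem_insert_iff, Set.mem_singleton_iff, Set.image_univ, Set.mem_range]
    constructor
    · rintro (h | h | h) <;> exact ⟨_, h.symm⟩
    · rintro ⟨i, rfl⟩; fin_cases i <;> simp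
  rw [hset, mem_ideal_span_X_image]
  intro mo hmo
  have hne : mo ≠ 0 := by
    rintro rfl
    rw [mem_support_iff] at hmo
    exact hmo hp
  obtain ⟨i, hi⟩ := Finsupp.ne_iff.mp hne
  exact ⟨i, Set.mem_univ i, by simpa using hi⟩

lemma constantCoeff_zero_of_mem_m3 {p : PS}
    (hp : p ∈ (Ideal.span {X 0, X 1, X 2} : Ideal PS)) :
    constantCoeff p = 0 := by
  have : (Ideal.span {X 0, X 1, X 2} : Ideal PS)
      ≤ RingHom.ker (constantCoeff (σ := Fin 3) (R := ℝ)) := by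
    rw [Ideal.span_le]
    rintro q hq
    simp only [Set.mem_insert_iff, Set.mem_singleton_iff] at hq
    rcases hq with rfl | rfl | rfl <;> simp [RingHom.mem_ker]
  exact this hp

lemma constantCoeff_zero_of_mem_m2 {p : PS}
    (hp : p ∈ (Ideal.span {X 0, X 1} : Ideal PS)) :
    constantCoeff p = 0 := by
  have : (Ideal.span {X 0, X 1} : Ideal PS)
      ≤ RingHom.ker (constantCoeff (σ := Fin 3) (R := ℝ)) := by
    rw [Ideal.span_le]
    rintro q hq
    simp only [Set.mem_insert_iff, Set.mem_singleton_iff] at hq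
    rcases hq with rfl | rfl <;> simp [RingHom.mem_ker]
  exact this hp

lemma hcD_mul_eq_zero {D : ℕ} {x h : PS} (hx : constantCoeff x = 0)
    (hh : h.IsHomogeneous D) : homogeneousComponent D (x * h) = 0 := by
  conv_lhs => rw [← sum_homogeneousComponent x]
  rw [Finset.sum_mul, map_sum]
  refine Finset.sum_eq_zero fun e _ => ?_
  by_cases he0 : e = 0
  · subst he0
    rw [homogeneousComponent_zero]
    have : coeff 0 x = 0 := hx
    rw [this, map_zero, zero_mul, map_zero]
  · have hhom : ((homogeneousComponent e x) * h).IsHomogeneous (e + D) :=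
      (homogeneousComponent_isHomogeneous e x).mul hh
    rw [homogeneousComponent_of_mem ((mem_homogeneousSubmodule _ _).mpr hhom),
      if_neg (show ¬ D = e + D by omega)]

lemma prp_scalar {Gp Hp : PS} (hG : Gp ≠ 0) (hH : Hp ≠ 0) (h : Prp Gp Hp) :
    ∃ c : ℝ, c ≠ 0 ∧ Gp = c • Hp := by
  rcases h with ⟨c, hc⟩ | ⟨c, hc⟩
  · refine ⟨c, fun h0 => hG (by rw [hc, h0, zero_smul]), hc⟩
  · have hc0 : c ≠ 0 := fun h0 => hH (by rw [hc, h0, zero_smul])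
    exact ⟨c⁻¹, inv_ne_zero hc0, by rw [hc, smul_smul, inv_mul_cancel₀ hc0, one_smul]⟩

set_option maxHeartbeats 2000000 in
theorem pencil_minimal_generation
    (r N n s : ℕ) (hN : 2 ≤ N) (hs : 2 ≤ s)
    (G : Fin N → PS)
    (hhom : ∀ i, (G i).IsHomogeneous n)
    (hvan : ∀ i, G i ∈ (Ideal.span {X 0, X 1} : Ideal PS))
    (hrel : IsRelPrime (G ⟨0, by omega⟩) (G ⟨1, by omega⟩))
    (hspan : ∀ i, G i ∈ Submodule.span ℝ {G ⟨0, by omega⟩, G ⟨1, by omega⟩})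
    -- there are exactly `s` pairwise non-proportional forms among the `G i`
    (T : Finset (Fin N)) (hTcard : T.card = s)
    (hTdist : ∀ i ∈ T, ∀ j ∈ T, i ≠ j → ¬ Prp (G i) (G j))
    (hTrep : ∀ i : Fin N, ∃ j ∈ T, Prp (G i) (G j))
    (t : ℕ) (ht : t = min s (r + 2))
    (hfirst : ∀ i j : Fin N, (i : ℕ) < t → (j : ℕ) < t → i ≠ j → ¬ Prp (G i) (G j))
    (J : Ideal PS) (hJ : J = Ideal.span (Set.range fun i => G i ^ (r + 1))) :
    J = Ideal.span ((fun i => G i ^ (r + 1)) '' {i : Fin N | (i : ℕ) < t}) ∧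
      mingens J = t := by
  classical
  have h0N : 0 < N := by omega
  have h1N : 1 < N := by omega
  set g0 : PS := G ⟨0, h0N⟩ with hg0def
  set g1 : PS := G ⟨1, h1N⟩ with hg1def
  have hrel' : IsRelPrime g0 g1 := hrel
  have hspan' : ∀ i, G i ∈ Submodule.span ℝ {g0, g1} := hspan
  have ht2 : 2 ≤ t := by omega
  have htr : t ≤ r + 2 := by omega
  have htN : t ≤ N := by
    have := Finset.card_le_univ T
    rw [hTcard] at this
    simp only [Finset.card_univ, Fintype.card_fin] at this
    omega
  set m : ℕ := r + 1 with hm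
  -- basic non-degeneracy
  have hnu : ∀ i, ¬ IsUnit (G i) := by
    intro i hu
    have h1 := hu.map (constantCoeff (σ := Fin 3) (R := ℝ))
    rw [constantCoeff_zero_of_mem_m2 (hvan i)] at h1
    exact not_isUnit_zero h1
  have hnu0 : ¬ IsUnit g0 := hnu _
  have hnu1 : ¬ IsUnit g1 := hnu _
  have hg0ne : g0 ≠ 0 := fun h => hnu1 (hrel' (by rw [h]; exact dvd_zero g1) dvd_rfl)
  have hg1ne : g1 ≠ 0 := fun h => hnu0 (hrel' dvd_rfl (by rw [h]; exact dvd_zero g0))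
  -- coordinates in the pencil
  choose a b hab using fun i => Submodule.mem_span_pair.mp (hspan' i)
  have hGeq : ∀ (i j : Fin N) (c : ℝ), a i = c * a j → b i = c * b j → G i = c • G j := by
    intro i j c h1 h2
    rw [← hab i, ← hab j, smul_add, smul_smul, smul_smul, h1, h2]
  have hGne : ∀ i : Fin N, (i : ℕ) < t → G i ≠ 0 := by
    intro i hi h0
    by_cases h : (i : ℕ) = 0
    · refine hfirst i ⟨1, h1N⟩ hi (show 1 < t by omega) (fun he => by simp [he] at h)
        (Or.inl ⟨0, by rw [h0, zero_smul]⟩)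
    · refine hfirst i ⟨0, h0N⟩ hi (show 0 < t by omega) (fun he => h (by simp [he]))
        (Or.inl ⟨0, by rw [h0, zero_smul]⟩)
  have hvne : ∀ i : Fin N, (i : ℕ) < t → ¬ (a i = 0 ∧ b i = 0) := by
    rintro i hi ⟨ha, hb⟩
    exact hGne i hi (by rw [← hab i, ha, hb, zero_smul, zero_smul, add_zero])
  have hcross : ∀ i j : Fin N, (i : ℕ) < t → (j : ℕ) < t → i ≠ j →
      a i * b j - a j * b i ≠ 0 := by
    intro i j hi hj hij h
    apply hfirst i j hi hj hij
    rcases eq_or_ne (b j) 0 with hbj | hbj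
    · have haj : a j ≠ 0 := fun haj => (hvne j hj) ⟨haj, hbj⟩
      have hbi : b i = 0 := by
        rw [hbj, mul_zero] at h
        have h' : a j * b i = 0 := by linarith
        exact (mul_eq_zero.mp h').resolve_left haj
      exact Or.inl ⟨a i / a j, hGeq i j _ (div_mul_cancel₀ (a i) haj).symm (by rw [hbi, hbj, mul_zero])⟩
    · refine Or.inl ⟨b i / b j, hGeq i j _ ?_ (div_mul_cancel₀ (b i) hbj).symm⟩
      field_simp
      linear_combination h
  -- the algebra map from binary forms
  set Φ : PB →ₐ[ℝ] PS := aeval ![g0, g1] with hΦdef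
  have hΦX0 : Φ (X 0) = g0 := by simp [hΦdef]
  have hΦX1 : Φ (X 1) = g1 := by simp [hΦdef]
  have hΦell : ∀ i : Fin N, Φ (ell (a i) (b i)) = G i := by
    intro i
    rw [ell, map_add, map_mul, map_mul, hΦX0, hΦX1, aeval_C, aeval_C, algebraMap_eq,
      ← smul_eq_C_mul, ← smul_eq_C_mul, hab i]
  have hΦell_pow : ∀ i : Fin N, Φ (ell (a i) (b i) ^ m) = G i ^ m := by
    intro i; rw [map_pow, hΦell]
  -- transfer of linear relations
  have hTR : ∀ q ∈ VB m, Φ q = 0 → q = 0 := by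
    intro q hq h0
    rw [VB, Submodule.mem_span_range_iff_exists_fun] at hq
    obtain ⟨c, hc⟩ := hq
    have hc' : ∀ k : Fin (m+1), c k = 0 := by
      apply mono_indep_fin hnu1 hg1ne hrel' m c
      rw [← h0, ← hc, map_sum]
      refine Finset.sum_congr rfl fun k _ => ?_
      rw [map_smul, map_mul, map_pow, map_pow, hΦX0, hΦX1]
    rw [← hc]
    exact Finset.sum_eq_zero fun k _ => by rw [hc' k, zero_smul]
  -- first-t indices
  have hEmb : ∀ k : Fin t, (k : ℕ) < N := fun k => lt_of_lt_of_le k.2 htN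
  set emb : Fin t → Fin N := fun k => ⟨k, hEmb k⟩ with hembdef
  have hembne : ∀ k l : Fin t, k ≠ l → emb k ≠ emb l := by
    intro k l hkl h
    rw [hembdef] at h
    simp only [Fin.mk.injEq] at h
    exact hkl (Fin.ext h)
  -- independence of the ell-powers
  have hELI : ∀ d : Fin t → ℝ,
      (∑ k, d k • ell (a (emb k)) (b (emb k)) ^ m = 0) → ∀ k, d k = 0 := by
    intro d hd k
    refine ell_pow_indep (fun k : Fin t => (a (emb k), b (emb k))) m Finset.univ ?_
      (fun k _ => hvne (emb k) k.2) (fun k _ l _ hkl => ?_) d hd k (Finset.mem_univ k)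
    · rw [Finset.card_univ, Fintype.card_fin]; omega
    · exact hcross (emb k) (emb l) k.2 l.2 (hembne k l hkl)
  -- independence of the G-powers
  have hLIS : ∀ d : Fin t → ℝ, (∑ k, d k • G (emb k) ^ m = 0) → ∀ k, d k = 0 := by
    intro d hd
    apply hELI d
    apply hTR _ (Submodule.sum_mem _ fun k _ => Submodule.smul_mem _ _ (ell_pow_mem_VB _ _ _))
    rw [map_sum]
    simpa only [map_smul, hΦell_pow] using hd
  set W : Submodule ℝ PS := Submodule.span ℝ (Set.range fun k : Fin t => G (emb k) ^ m)
    with hWdef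
  have hLI : LinearIndependent ℝ (fun k : Fin t => G (emb k) ^ m) :=
    Fintype.linearIndependent_iff.mpr hLIS
  have hfrW : Module.finrank ℝ W = t := by
    rw [hWdef, finrank_span_eq_card hLI, Fintype.card_fin]
  -- every power lies in W
  have hA : ∀ j : Fin N, G j ^ m ∈ W := by
    rcases le_or_gt s (r + 2) with hcase | hcase
    · -- t = s : use proportionality representatives
      have hTne : ∀ k ∈ T, G k ≠ 0 := by
        intro k hk h0
        obtain ⟨l, hl, hlk⟩ := Finset.exists_mem_ne (s := T) (by omega) k
        exact hTdist k hk l hl hlk.symm (Or.inl ⟨0, by rw [h0, zero_smul]⟩)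
      choose f hfT hfP using hTrep
      have hinj : Function.Injective (fun k : Fin t => f (emb k)) := by
        intro k l hkl
        by_contra hne
        obtain ⟨c, hc0, hc⟩ := prp_scalar (hGne (emb k) k.2) (hTne _ (hfT (emb k)))
          (hfP (emb k))
        obtain ⟨d, hd0, hd⟩ := prp_scalar (hGne (emb l) l.2) (hTne _ (hfT (emb l)))
          (hfP (emb l))
        simp only at hkl
        rw [hkl] at hc
        refine hfirst (emb k) (emb l) k.2 l.2 (hembne k l hne)
          (Or.inl ⟨c / d, ?_⟩)
        rw [hd, smul_smul, div_mul_cancel₀ _ hd0]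
        exact hc
      have himgT : Finset.image (fun k : Fin t => f (emb k)) Finset.univ = T := by
        apply Finset.eq_of_subset_of_card_le
        · intro x hx
          obtain ⟨k, _, rfl⟩ := Finset.mem_image.mp hx
          exact hfT (emb k)
        · rw [Finset.card_image_of_injective _ hinj, Finset.card_univ, Fintype.card_fin,
            hTcard]
          omega
      intro j
      rcases eq_or_ne (G j) 0 with h0 | h0
      · rw [h0, zero_pow (by omega : m ≠ 0)]
        exact zero_mem _
      · have hj : f j ∈ Finset.image (fun k : Fin t => f (emb k)) Finset.univ := by
          rw [himgT]; exact hfT j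
        obtain ⟨k, _, hk⟩ := Finset.mem_image.mp hj
        obtain ⟨c, hc0, hc⟩ := prp_scalar h0 (hTne _ (hfT j)) (hfP j)
        have hPk : Prp (G (emb k)) (G (f j)) := by rw [← hk]; exact hfP (emb k)
        obtain ⟨d, hd0, hd⟩ := prp_scalar (hGne (emb k) k.2) (hTne _ (hfT j)) hPk
        have hGj : G j = (c / d) • G (emb k) := by
          rw [hd, smul_smul, div_mul_cancel₀ _ hd0]
          exact hc
        rw [hGj, smul_pow]
        exact Submodule.smul_mem _ _ (Submodule.subset_span ⟨k, rfl⟩)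
    · -- t = r + 2 : the span of the first t powers is everything
      have htm : t = m + 1 := by omega
      have hELIli : LinearIndependent ℝ (fun k : Fin t => ell (a (emb k)) (b (emb k)) ^ m) :=
        Fintype.linearIndependent_iff.mpr hELI
      have hspanB : Submodule.span ℝ
          (Set.range fun k : Fin t => ell (a (emb k)) (b (emb k)) ^ m) = VB m := by
        apply Submodule.eq_of_le_of_finrank_le
        · rw [Submodule.span_le]
          rintro x ⟨k, rfl⟩
          exact ell_pow_mem_VB _ _ _
        · rw [finrank_span_eq_card hELIli, Fintype.card_fin]
          exact (finrank_VB_le m).trans (by omega)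
      intro j
      have h1 : ell (a j) (b j) ^ m ∈ Submodule.span ℝ
          (Set.range fun k : Fin t => ell (a (emb k)) (b (emb k)) ^ m) := by
        rw [hspanB]; exact ell_pow_mem_VB _ _ m
      have h2 := Submodule.apply_mem_span_image_of_mem_span (Φ.toLinearMap) h1
      rw [← Set.range_comp] at h2
      have h3 : (Φ.toLinearMap ∘ fun k : Fin t => ell (a (emb k)) (b (emb k)) ^ m)
          = fun k : Fin t => G (emb k) ^ m := funext fun k => by
          simp only [Function.comp_apply, AlgHom.toLinearMap_apply]; exact hΦell_pow (emb k)
      rw [h3] at h2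
      have h4 : Φ (ell (a j) (b j) ^ m) = G j ^ m := hΦell_pow j
      rw [← h4]
      exact h2
  -- membership of generators in J
  have hgen : ∀ i : Fin N, G i ^ m ∈ J := fun i => hJ ▸ Ideal.subset_span ⟨i, rfl⟩
  have hWJ : ∀ x ∈ W, x ∈ J := by
    intro x hx
    have hle : W ≤ Submodule.restrictScalars ℝ (J : Submodule PS PS) := by
      rw [hWdef, Submodule.span_le]
      rintro y ⟨k, rfl⟩
      exact hgen (emb k)
    exact hle hx
  -- first goal
  have goal1 : J = Ideal.span ((fun i => G i ^ (r + 1)) '' {i : Fin N | (i : ℕ) < t}) := by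
    have hset : ((fun i => G i ^ (r + 1)) '' {i : Fin N | (i : ℕ) < t})
        = Set.range (fun k : Fin t => G (emb k) ^ m) := by
      ext x
      constructor
      · rintro ⟨i, hi, rfl⟩
        exact ⟨⟨(i : ℕ), hi⟩, rfl⟩
      · rintro ⟨k, rfl⟩
        exact ⟨emb k, k.2, rfl⟩
    rw [hset]
    apply le_antisymm
    · rw [hJ, Ideal.span_le]
      rintro x ⟨i, rfl⟩
      have hle : W ≤ Submodule.restrictScalars ℝ
          ((Ideal.span (Set.range fun k : Fin t => G (emb k) ^ m) : Ideal PS)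
            : Submodule PS PS) := by
        rw [hWdef, Submodule.span_le]
        exact fun y hy => Ideal.subset_span hy
      exact hle (hA i)
    · rw [Ideal.span_le]
      rintro x ⟨k, rfl⟩
      exact SetLike.mem_coe.mpr (hgen (emb k))
  refine ⟨goal1, ?_⟩
  -- second goal : mingens J = t
  set K : Ideal PS := (Ideal.span {X 0, X 1, X 2} : Ideal PS) * J with hKdef
  set K' : Submodule ℝ PS := Submodule.restrictScalars ℝ (K : Submodule PS PS) with hK'def
  have hKJ : K ≤ J := Ideal.mul_le.mpr fun _ _ _ hy => Ideal.mul_mem_left _ _ hy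
  set DD : ℕ := n * m with hDDdef
  have hWhom : W ≤ homogeneousSubmodule (Fin 3) ℝ DD := by
    rw [hWdef, Submodule.span_le]
    rintro y ⟨k, rfl⟩
    exact (mem_homogeneousSubmodule _ _).mpr ((hhom (emb k)).pow m)
  have hcW : ∀ w ∈ W, homogeneousComponent DD w = w := by
    intro w hw
    rw [homogeneousComponent_of_mem (hWhom hw), if_pos rfl]
  have hJ0 : ∀ y ∈ J, ∀ x : PS, constantCoeff x = 0 →
      homogeneousComponent DD (x * y) = 0 := by
    intro y hy
    have hy' : y ∈ Ideal.span (Set.range fun i => G i ^ (r + 1)) := hJ ▸ hy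
    refine Submodule.span_induction ?_ ?_ ?_ ?_ hy'
    · rintro y ⟨i, rfl⟩ x hx
      exact hcD_mul_eq_zero hx ((hhom i).pow m)
    · intro x hx
      rw [mul_zero, map_zero]
    · intro y z _ _ h1 h2 x hx
      rw [mul_add, map_add, h1 x hx, h2 x hx, add_zero]
    · intro p y _ h1 x hx
      rw [smul_eq_mul, ← mul_assoc]
      exact h1 (x * p) (by rw [map_mul, hx, zero_mul])
  have hcK : ∀ x ∈ K, homogeneousComponent DD x = 0 := by
    intro x hx
    exact Submodule.mul_induction_on hx
      (fun p hp y hy => hJ0 y hy p (constantCoeff_zero_of_mem_m3 hp))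
      (fun u v h1 h2 => by rw [map_add, h1, h2, add_zero])
  have hdisj : ∀ x, x ∈ W → x ∈ K → x = 0 := by
    intro x hw hk
    rw [← hcW x hw, hcK x hk]
  -- the splitting J = W ⊔ mJ
  have hsplit : Submodule.restrictScalars ℝ (J : Submodule PS PS) = W ⊔ K' := by
    apply le_antisymm
    · intro x hx
      have hx' : x ∈ Ideal.span (Set.range fun i => G i ^ (r + 1)) := hJ ▸ hx
      refine Submodule.span_induction ?_ ?_ ?_ ?_ hx'
      · rintro y ⟨i, rfl⟩
        exact Submodule.mem_sup_left (hA i)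
      · exact zero_mem _
      · intro y z _ _ h1 h2
        exact add_mem h1 h2
      · intro p x _ hx
        obtain ⟨w, hw, k, hk, rfl⟩ := Submodule.mem_sup.mp hx
        have h1 : p • (w + k) = (constantCoeff p) • w
            + ((p - C (constantCoeff p)) * w + p * k) := by
          rw [smul_eq_mul, smul_eq_C_mul]
          ring
        rw [h1]
        refine add_mem (Submodule.mem_sup_left (Submodule.smul_mem _ _ hw))
          (Submodule.mem_sup_right (add_mem ?_ ?_))
        · exact Ideal.mul_mem_mul (mem_m3_of_constantCoeff (by simp)) (hWJ w hw)
        · exact Ideal.mul_mem_left _ _ hk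
    · refine sup_le ?_ ?_
      · intro x hx
        exact hWJ x hx
      · intro x hx
        exact hKJ hx
  -- compute the image in the quotient
  set q : PS →ₗ[ℝ] PS ⧸ K := (Ideal.Quotient.mkₐ ℝ K).toLinearMap with hqdef
  have hqzero : ∀ x : PS, q x = 0 ↔ x ∈ K := by
    intro x
    rw [hqdef]
    simp only [AlgHom.toLinearMap_apply, Ideal.Quotient.mkₐ_eq_mk]
    exact Ideal.Quotient.eq_zero_iff_mem
  have himg : Submodule.map q (Submodule.restrictScalars ℝ (J : Submodule PS PS))
      = Submodule.map q W := by
    rw [hsplit, Submodule.map_sup]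
    have hmapK : Submodule.map q K' = ⊥ := by
      rw [Submodule.eq_bot_iff]
      rintro y ⟨x, hx, rfl⟩
      exact (hqzero x).mpr hx
    rw [hmapK, sup_bot_eq]
  haveI : FiniteDimensional ℝ W := FiniteDimensional.span_of_finite ℝ (Set.finite_range _)
  have hrank : Module.finrank ℝ (Submodule.map q W) = t := by
    set f : W →ₗ[ℝ] PS ⧸ K := q.comp W.subtype with hfdef
    have hrange : LinearMap.range f = Submodule.map q W := by
      rw [hfdef, LinearMap.range_comp, Submodule.range_subtype]
    have hkerf : LinearMap.ker f = ⊥ := by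
      rw [LinearMap.ker_eq_bot']
      intro w hw
      have h1 : q (w : PS) = 0 := hw
      exact Subtype.ext (hdisj _ w.2 ((hqzero _).mp h1))
    have h2 := LinearMap.finrank_range_add_finrank_ker f
    rw [hrange, hkerf, finrank_bot, add_zero] at h2
    rw [h2, hfrW]
  have hfin : mingens J = Module.finrank ℝ
      ↥(Submodule.map q (Submodule.restrictScalars ℝ (J : Submodule PS PS))) := rfl
  rw [hfin, himg, hrank]

end
end

section
/- Let I ⊆ S = ℝ[x,y,z] be an ideal generated by polynomials lying in the subring ℝ[x,y] (involving only x and y), and suppose ⟨x,y⟩^k ⊆ I for some k ≥ 0. Then I is saturated with respect to m: (I : m^∞) = I. -/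
/-!
Statement 10: if `I ⊆ S = ℝ[x,y,z]` is generated by polynomials involving only `x` and
`y` (no monomial of a generator involves the variable `z = X 2`), and `⟨x,y⟩^k ⊆ I` for
some `k`, then `I` is saturated with respect to `m = ⟨x,y,z⟩`:
`f ∈ I ↔ ∃ k, m^k f ⊆ I`.
-/

open MvPolynomial

/-- The variable-swapping + `finSuccEquiv` identification `ℝ[x,y,z] ≃ ℝ[x,y][z]`,
    sending `X 2` to `Polynomial.X`. -/
noncomputable def e3 : MvPolynomial (Fin 3) ℝ ≃ₐ[ℝ] Polynomial (MvPolynomial (Fin 2) ℝ) :=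
  (renameEquiv ℝ (Equiv.swap (0 : Fin 3) 2)).trans (finSuccEquiv ℝ 2)

lemma e3_X2 : e3 (X 2) = Polynomial.X := by
  have h : (Equiv.swap (0 : Fin 3) 2) 2 = 0 := Equiv.swap_apply_right 0 2
  have : e3 (X 2) = finSuccEquiv ℝ 2 (X 0) := by
    simp [e3, renameEquiv_apply, rename_X, h]
  rw [this, finSuccEquiv_X_zero]

lemma e3_X0 : e3 (X 0) = Polynomial.C (X 1) := by
  have h : (Equiv.swap (0 : Fin 3) 2) 0 = 2 := Equiv.swap_apply_left 0 2
  have h2 : e3 (X 0) = finSuccEquiv ℝ 2 (X 2) := by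
    simp [e3, renameEquiv_apply, rename_X, h]
  rw [h2, show (2 : Fin 3) = Fin.succ 1 from rfl, finSuccEquiv_X_succ]

lemma e3_X1 : e3 (X 1) = Polynomial.C (X 0) := by
  have h : (Equiv.swap (0 : Fin 3) 2) 1 = 1 := by decide
  have h2 : e3 (X 1) = finSuccEquiv ℝ 2 (X 1) := by
    simp [e3, renameEquiv_apply, rename_X, h]
  rw [h2, show (1 : Fin 3) = Fin.succ 0 from rfl, finSuccEquiv_X_succ]

lemma e3_const (t : MvPolynomial (Fin 3) ℝ) (ht : ∀ m ∈ t.support, m 2 = 0) :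
    ∃ t' : MvPolynomial (Fin 2) ℝ, e3 t = Polynomial.C t' := by
  classical
  -- t is supported on {0, 1}
  have hvars : ↑t.vars ⊆ ({0, 1} : Set (Fin 3)) := by
    intro i hi
    rw [Finset.mem_coe, mem_vars] at hi
    obtain ⟨m, hm, him⟩ := hi
    have h2 : m 2 = 0 := ht m hm
    have hi0 : m i ≠ 0 := Finsupp.mem_support_iff.mp him
    have : i ≠ 2 := by rintro rfl; exact hi0 h2
    fin_cases i
    · exact Or.inl rfl
    · exact Or.inr rfl
    · exact absurd rfl this
  have hts : t ∈ supported ℝ ({0, 1} : Set (Fin 3)) := mem_supported.mpr hvars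
  rw [supported_eq_range_rename, AlgHom.mem_range] at hts
  obtain ⟨t₀, ht₀⟩ := hts
  -- compare the two algebra homs on `MvPolynomial ↥{0,1} ℝ`
  set v : ({0, 1} : Set (Fin 3)) → MvPolynomial (Fin 2) ℝ :=
    fun i => if (i : Fin 3) = 0 then X 1 else X 0 with hv
  have key : (e3.toAlgHom.comp (rename ((↑) : ({0,1} : Set (Fin 3)) → Fin 3)))
      = (Polynomial.CAlgHom.comp (aeval v)) := by
    apply MvPolynomial.algHom_ext
    intro i
    simp only [AlgHom.comp_apply, rename_X, aeval_X]
    rcases i with ⟨j, hj⟩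
    rcases hj with hj | hj
    · subst hj
      rw [show (e3.toAlgHom) (X (⟨0, Or.inl rfl⟩ : ({0,1} : Set (Fin 3)))) = e3 (X 0) from rfl,
        e3_X0]
      simp [hv, Polynomial.CAlgHom_apply]
    · simp only [Set.mem_singleton_iff] at hj
      subst hj
      rw [show (e3.toAlgHom) (X (⟨1, Or.inr rfl⟩ : ({0,1} : Set (Fin 3)))) = e3 (X 1) from rfl,
        e3_X1]
      simp [hv, Polynomial.CAlgHom_apply]
  refine ⟨aeval v t₀, ?_⟩
  have := congrArg (fun φ => φ t₀) key
  simpa [ht₀, Polynomial.CAlgHom_apply] using this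

theorem ideal_in_xy_is_saturated
    (T : Set (MvPolynomial (Fin 3) ℝ))
    (hT : ∀ f ∈ T, ∀ m ∈ f.support, m 2 = 0)
    (I : Ideal (MvPolynomial (Fin 3) ℝ)) (hI : I = Ideal.span T)
    (hsupp : ∃ k : ℕ, (Ideal.span {X 0, X 1} : Ideal (MvPolynomial (Fin 3) ℝ)) ^ k ≤ I) :
    ∀ f : MvPolynomial (Fin 3) ℝ,
      (∃ k : ℕ, ∀ g ∈ (Ideal.span {X 0, X 1, X 2} : Ideal (MvPolynomial (Fin 3) ℝ)) ^ k,
          g * f ∈ I) ↔ f ∈ I := by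
  classical
  intro f
  constructor
  · rintro ⟨k, hk⟩
    -- z^k * f ∈ I
    have hz : (X 2 : MvPolynomial (Fin 3) ℝ) ∈
        (Ideal.span {X 0, X 1, X 2} : Ideal (MvPolynomial (Fin 3) ℝ)) :=
      Ideal.subset_span (by simp)
    have hzk : (X 2 : MvPolynomial (Fin 3) ℝ) ^ k ∈
        (Ideal.span {X 0, X 1, X 2} : Ideal (MvPolynomial (Fin 3) ℝ)) ^ k :=
      Ideal.pow_mem_pow hz k
    have hzf : (X 2 : MvPolynomial (Fin 3) ℝ) ^ k * f ∈ I := hk _ hzk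
    -- move everything through e3
    set eR : MvPolynomial (Fin 3) ℝ →+* Polynomial (MvPolynomial (Fin 2) ℝ) :=
      (e3 : MvPolynomial (Fin 3) ℝ →+* Polynomial (MvPolynomial (Fin 2) ℝ)) with heR
    have hsurj : Function.Surjective eR := e3.surjective
    have hinj : Function.Injective eR := e3.injective
    set J : Ideal (MvPolynomial (Fin 2) ℝ) :=
      Ideal.comap (Polynomial.C : MvPolynomial (Fin 2) ℝ →+* Polynomial (MvPolynomial (Fin 2) ℝ))
        (I.map eR) with hJ
    have hmapCJ : Ideal.map (Polynomial.C : MvPolynomial (Fin 2) ℝ →+* _) J ≤ I.map eR := by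
      rw [Ideal.map, Ideal.span_le]
      rintro p ⟨j, hj, rfl⟩
      exact hj
    have hIle : I.map eR ≤ Ideal.map (Polynomial.C : MvPolynomial (Fin 2) ℝ →+* _) J := by
      rw [hI, Ideal.map_span, Ideal.span_le]
      rintro p ⟨t, htT, rfl⟩
      obtain ⟨t', ht'⟩ := e3_const t (hT t htT)
      have htI : t ∈ I := hI ▸ Ideal.subset_span htT
      have : eR t ∈ I.map eR := Ideal.mem_map_of_mem eR htI
      rw [show eR t = Polynomial.C t' from ht'] at this ⊢
      exact Ideal.mem_map_of_mem _ this
    have heq : I.map eR = Ideal.map (Polynomial.C : MvPolynomial (Fin 2) ℝ →+* _) J :=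
      le_antisymm hIle hmapCJ
    -- e3 (z^k * f) = X^k * e3 f has all coefficients in J
    have hmem : eR ((X 2 : MvPolynomial (Fin 3) ℝ) ^ k * f) ∈ I.map eR :=
      Ideal.mem_map_of_mem eR hzf
    have hXk : eR ((X 2 : MvPolynomial (Fin 3) ℝ) ^ k * f)
        = Polynomial.X ^ k * eR f := by
      simp [heR, map_mul, map_pow, e3_X2]
    rw [hXk, heq, Ideal.mem_map_C_iff] at hmem
    have hcoeff : ∀ n, (eR f).coeff n ∈ J := by
      intro n
      have := hmem (n + k)
      rwa [Polynomial.coeff_X_pow_mul (eR f) k n] at this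
    have : eR f ∈ I.map eR := by
      rw [heq, Ideal.mem_map_C_iff]; exact hcoeff
    obtain ⟨x, hx, hxe⟩ := (Ideal.mem_map_iff_of_surjective eR hsurj).mp this
    rwa [hinj hxe] at hx
  · intro hf
    exact ⟨0, fun g _ => Ideal.mul_mem_left _ g hf⟩
end
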